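/- Packing bound for concentrated centers (Claim used in the generic minimax upper bound): Let n be a positive integer, let α ∈ (0, 1/2), let u > 0, and let T be a finite nonempty subset of ℝⁿ. Suppose x₁, …, x_m ∈ ℝⁿ satisfy ‖x_i − x_j‖₂ ≥ 2u for all i ≠ j, and that for each i there exists a subset S_i ⊆ T with |S_i| ≥ α·|T| such that for every unit vector v ∈ ℝⁿ the number of points x ∈ S_i with |⟨v, x − x_i⟩| ≥ u is at most (α/10)·|S_i|. Then m < 5/α. -/

import Mathlib

open Finset

open Classical in
/-- Packing bound for concentrated centers. -/
theorem stmt_1 (n : ℕ) (hn : 0 < n) (α u : ℝ) (hα0 : 0 < α) (hα : α < 1 / 2) (hu : 0 < u)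
    (T : Finset (EuclideanSpace ℝ (Fin n))) (hT : T.Nonempty)
    (m : ℕ) (x : Fin m → EuclideanSpace ℝ (Fin n))
    (hsep : ∀ i j, i ≠ j → 2 * u ≤ ‖x i - x j‖)
    (S : Fin m → Finset (EuclideanSpace ℝ (Fin n)))
    (hsub : ∀ i, S i ⊆ T)
    (hcard : ∀ i, α * (T.card : ℝ) ≤ ((S i).card : ℝ))
    (hconc : ∀ i, ∀ v : EuclideanSpace ℝ (Fin n), ‖v‖ = 1 →
      (((S i).filter fun z => u ≤ |(inner ℝ v (z - x i) : ℝ)|).card : ℝ) ≤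
        (α / 10) * ((S i).card : ℝ)) :
    (m : ℝ) < 5 / α := by
  rcases Nat.eq_zero_or_pos m with hm | hm
  · subst hm; simp; positivity
  have hT0 : (0:ℝ) < T.card := by
    exact_mod_cast Nat.pos_of_ne_zero (fun h => by simp [Finset.card_eq_zero] at h; exact hT.ne_empty h)
  -- pairwise intersection bound
  have hpair : ∀ i j, i ≠ j →
      (((S i) ∩ (S j)).card : ℝ) ≤ (α/10) * (((S i).card : ℝ) + ((S j).card : ℝ)) := by
    intro i j hij
    have hne : x j - x i ≠ 0 := by
      intro h
      have h2 := hsep i j hij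
      rw [show x i - x j = -(x j - x i) by abel, h] at h2
      simp at h2
      nlinarith
    have hw : (0:ℝ) < ‖x j - x i‖ := norm_pos_iff.mpr hne
    set v : EuclideanSpace ℝ (Fin n) := ‖x j - x i‖⁻¹ • (x j - x i) with hv_def
    have hv : ‖v‖ = 1 := by
      rw [hv_def, norm_smul, norm_inv, norm_norm, inv_mul_cancel₀ hw.ne']
    have hsubset : (S i) ∩ (S j) ⊆
        ((S i).filter fun z => u ≤ |(inner ℝ v (z - x i) : ℝ)|) ∪
        ((S j).filter fun z => u ≤ |(inner ℝ v (z - x j) : ℝ)|) := by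
      intro z hz
      rw [Finset.mem_inter] at hz
      have hkey : (inner ℝ v (z - x i) : ℝ) - (inner ℝ v (z - x j) : ℝ) = ‖x j - x i‖ := by
        rw [← inner_sub_right]
        have h1 : (z - x i) - (z - x j) = x j - x i := by abel
        rw [h1, hv_def, real_inner_smul_left, real_inner_self_eq_norm_sq]
        field_simp
      have h2u : 2*u ≤ ‖x j - x i‖ := by
        rw [show x j - x i = -(x i - x j) by abel, norm_neg]; exact hsep i j hij
      have hor : u ≤ |(inner ℝ v (z - x i) : ℝ)| ∨ u ≤ |(inner ℝ v (z - x j) : ℝ)| := by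
        by_contra h
        push_neg at h
        have ha := abs_lt.mp h.1
        have hb := abs_lt.mp h.2
        nlinarith
      rw [Finset.mem_union, Finset.mem_filter, Finset.mem_filter]
      rcases hor with h | h
      · exact Or.inl ⟨hz.1, h⟩
      · exact Or.inr ⟨hz.2, h⟩
    calc (((S i) ∩ (S j)).card : ℝ)
        ≤ ((((S i).filter fun z => u ≤ |(inner ℝ v (z - x i) : ℝ)|) ∪
            ((S j).filter fun z => u ≤ |(inner ℝ v (z - x j) : ℝ)|)).card : ℝ) := by
          exact_mod_cast Finset.card_le_card hsubset
      _ ≤ (((S i).filter fun z => u ≤ |(inner ℝ v (z - x i) : ℝ)|).card : ℝ) +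
          (((S j).filter fun z => u ≤ |(inner ℝ v (z - x j) : ℝ)|).card : ℝ) := by
          exact_mod_cast Finset.card_union_le _ _
      _ ≤ (α/10) * ((S i).card : ℝ) + (α/10) * ((S j).card : ℝ) :=
          add_le_add (hconc i v hv) (hconc j v hv)
      _ = (α/10) * (((S i).card : ℝ) + ((S j).card : ℝ)) := by ring
  -- counting
  set d : EuclideanSpace ℝ (Fin n) → ℕ := fun z => (univ.filter fun i => z ∈ S i).card with hd
  have hdz : ∀ z, (d z : ℝ) = ∑ i : Fin m, (if z ∈ S i then (1:ℝ) else 0) := by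
    intro z
    rw [hd]
    push_cast [Finset.card_filter]
    rfl
  have hsum : ∑ z ∈ T, (d z : ℝ) = ∑ i : Fin m, ((S i).card : ℝ) := by
    simp_rw [hdz]
    rw [Finset.sum_comm]
    congr 1
    ext i
    rw [Finset.sum_boole, Finset.filter_mem_eq_inter, Finset.inter_eq_right.mpr (hsub i)]
  have hsq : ∑ z ∈ T, (d z : ℝ)^2 = ∑ i : Fin m, ∑ j : Fin m, (((S i) ∩ (S j)).card : ℝ) := by
    have : ∀ z, (d z : ℝ)^2 = ∑ i : Fin m, ∑ j : Fin m,
        (if z ∈ S i ∧ z ∈ S j then (1:ℝ) else 0) := by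
      intro z
      rw [hdz, sq, Finset.sum_mul_sum]
      congr 1; ext i; congr 1; ext j
      by_cases h1 : z ∈ S i <;> by_cases h2 : z ∈ S j <;> simp [h1, h2]
    simp_rw [this]
    rw [Finset.sum_comm]
    congr 1; ext i
    rw [Finset.sum_comm]
    congr 1; ext j
    have heq : T.filter (fun z => z ∈ S i ∧ z ∈ S j) = S i ∩ S j := by
      ext z
      simp only [Finset.mem_filter, Finset.mem_inter]
      exact ⟨fun h => h.2, fun h => ⟨hsub i h.1, h⟩⟩
    rw [Finset.sum_boole, heq]
  set A : ℝ := ∑ i : Fin m, ((S i).card : ℝ) with hA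
  have hApos : (m:ℝ) * α * T.card ≤ A := by
    rw [hA]
    calc (m:ℝ) * α * T.card = ∑ _i : Fin m, α * (T.card:ℝ) := by
          rw [Finset.sum_const]; simp; ring
      _ ≤ _ := Finset.sum_le_sum fun i _ => hcard i
  have hAgt : 0 < A := lt_of_lt_of_le (by positivity) hApos
  -- bound double sum
  have hdouble : ∑ i : Fin m, ∑ j : Fin m, (((S i) ∩ (S j)).card : ℝ)
      ≤ A + (α/10) * (2 * ((m:ℝ) - 1) * A) := by
    have step : ∀ i : Fin m, ∑ j : Fin m, (((S i) ∩ (S j)).card : ℝ)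
        ≤ ((S i).card : ℝ) + (α/10) * (((m:ℝ)-1) * ((S i).card : ℝ) + (A - ((S i).card : ℝ))) := by
      intro i
      rw [← Finset.sum_erase_add _ _ (Finset.mem_univ i)]
      have h1 : ∑ j ∈ univ.erase i, (((S i) ∩ (S j)).card : ℝ)
          ≤ ∑ j ∈ univ.erase i, (α/10) * (((S i).card : ℝ) + ((S j).card : ℝ)) :=
        Finset.sum_le_sum fun j hj => hpair i j (Finset.ne_of_mem_erase hj).symm
      have h2 : ∑ j ∈ univ.erase i, (α/10) * (((S i).card : ℝ) + ((S j).card : ℝ))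
          = (α/10) * (((m:ℝ)-1) * ((S i).card : ℝ) + (A - ((S i).card : ℝ))) := by
        have hsumerase : ∑ j ∈ univ.erase i, ((S j).card : ℝ) = A - ((S i).card : ℝ) := by
          rw [hA, ← Finset.sum_erase_add _ _ (Finset.mem_univ i)]; ring
        rw [← Finset.mul_sum, Finset.sum_add_distrib, Finset.sum_const, hsumerase,
          Finset.card_erase_of_mem (Finset.mem_univ i), Finset.card_univ, Fintype.card_fin,
          nsmul_eq_mul, Nat.cast_sub hm]
        push_cast
        ring
      have h3 : ((S i ∩ S i).card : ℝ) = ((S i).card : ℝ) := by simp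
      linarith [h1, h2.le, h2.ge]
    calc ∑ i : Fin m, ∑ j : Fin m, (((S i) ∩ (S j)).card : ℝ)
        ≤ ∑ i : Fin m, (((S i).card : ℝ) + (α/10) * (((m:ℝ)-1) * ((S i).card : ℝ) + (A - ((S i).card : ℝ)))) :=
          Finset.sum_le_sum fun i _ => step i
      _ = A + (α/10) * (2 * ((m:ℝ) - 1) * A) := by
          rw [Finset.sum_add_distrib, ← hA, ← Finset.mul_sum, Finset.sum_add_distrib,
            ← Finset.mul_sum, Finset.sum_sub_distrib, ← hA, Finset.sum_const,
            Finset.card_univ, Fintype.card_fin, nsmul_eq_mul]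
          ring
  -- Cauchy-Schwarz
  have hcs : A^2 ≤ (T.card : ℝ) * ∑ z ∈ T, (d z : ℝ)^2 := by
    rw [← hsum]
    exact_mod_cast sq_sum_le_card_mul_sum_sq
  rw [hsq] at hcs
  have hfinal : A^2 ≤ (T.card : ℝ) * (A + (α/10) * (2 * ((m:ℝ) - 1) * A)) := by
    refine hcs.trans (mul_le_mul_of_nonneg_left hdouble hT0.le)
  -- conclude
  have hkey : A ≤ (T.card : ℝ) * (1 + (α/5) * ((m:ℝ) - 1)) := by
    nlinarith [hAgt]
  have hma : (m:ℝ) * α ≤ 1 + (α/5) * ((m:ℝ) - 1) := by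
    nlinarith [hApos, hT0]
  rw [lt_div_iff₀ hα0]
  nlinarith [hm.le]
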